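/- arXiv:math/0501133 — 4 statements merged into one kernel-verified Lean document; each statement's English description precedes it below -/
import Mathlib

section
/- Let f : ℝ → ℝ be a continuous nonnegative function with f(θ) → 0 as θ → -∞ and f(θ) → ∞ as θ → ∞ (i.e., f is a spiral). Then the polar curve r = f(θ) intersects every line in the plane: for all real A, B, C with (A, B) ≠ (0, 0), there exists θ ∈ ℝ such that A·f(θ)·cos θ + B·f(θ)·sin θ + C = 0. -/
open Real Filter

theorem spiral_intersects_every_line
    (f : ℝ → ℝ) (hf : Continuous f) (hnn : ∀ θ, 0 ≤ f θ)
    (hbot : Tendsto f atBot (nhds 0)) (htop : Tendsto f atTop atTop) :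
    ∀ A B C : ℝ, (A, B) ≠ ((0 : ℝ), (0 : ℝ)) →
      ∃ θ : ℝ, A * f θ * Real.cos θ + B * f θ * Real.sin θ + C = 0 := by
  intro A B C hAB
  set g : ℝ → ℝ := fun θ => A * f θ * Real.cos θ + B * f θ * Real.sin θ + C with hg
  have hgc : Continuous g := by
    continuity
  -- the complex number (A,B) is nonzero
  have hz : (⟨A, B⟩ : ℂ) ≠ 0 := by
    intro h
    apply hAB
    have h1 : (⟨A, B⟩ : ℂ).re = (0 : ℂ).re := by rw [h]
    have h2 : (⟨A, B⟩ : ℂ).im = (0 : ℂ).im := by rw [h]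
    simp at h1 h2
    simp [h1, h2]
  set R : ℝ := ‖(⟨A, B⟩ : ℂ)‖ with hR
  have hRpos : 0 < R := by
    simpa [hR] using (norm_pos_iff.mpr hz)
  set φ : ℝ := Complex.arg ⟨A, B⟩ with hφ
  have hcos : Real.cos φ = A / R := by
    rw [hφ, hR]; exact Complex.cos_arg hz
  have hsin : Real.sin φ = B / R := by
    rw [hφ, hR]; exact Complex.sin_arg (⟨A, B⟩ : ℂ)
  have hdot : A * Real.cos φ + B * Real.sin φ = R := by
    rw [hcos, hsin]
    have hR2 : R ^ 2 = A ^ 2 + B ^ 2 := by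
      rw [hR, Complex.sq_norm, Complex.normSq_apply]; ring
    field_simp
    nlinarith [hR2]
  -- find where f is large
  obtain ⟨N, hN⟩ := eventually_atTop.mp (tendsto_atTop.mp htop ((|C| + 1) / R))
  obtain ⟨k, hk⟩ := exists_nat_ge ((N - φ) / (2 * Real.pi))
  have h2pi : (0 : ℝ) < 2 * Real.pi := by positivity
  have hge : N ≤ φ + k * (2 * Real.pi) := by
    have := (div_le_iff₀ h2pi).mp hk
    linarith
  set θ₂ : ℝ := φ + k * (2 * Real.pi) with hθ₂
  set θ₁ : ℝ := φ + Real.pi + k * (2 * Real.pi) with hθ₁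
  have hge1 : N ≤ θ₁ := by
    have := Real.pi_pos; rw [hθ₁]; linarith
  have hf2 : (|C| + 1) / R ≤ f θ₂ := hN _ hge
  have hf1 : (|C| + 1) / R ≤ f θ₁ := hN _ hge1
  have hcos2 : Real.cos θ₂ = Real.cos φ := Real.cos_add_nat_mul_two_pi φ k
  have hsin2 : Real.sin θ₂ = Real.sin φ := Real.sin_add_nat_mul_two_pi φ k
  have hcos1 : Real.cos θ₁ = -Real.cos φ := by
    rw [hθ₁]
    rw [Real.cos_add_nat_mul_two_pi (φ + Real.pi) k, Real.cos_add_pi]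
  have hsin1 : Real.sin θ₁ = -Real.sin φ := by
    rw [hθ₁]
    rw [Real.sin_add_nat_mul_two_pi (φ + Real.pi) k, Real.sin_add_pi]
  have hRf2 : |C| + 1 ≤ R * f θ₂ := by
    have := (div_le_iff₀' hRpos).mp hf2
    linarith
  have hRf1 : |C| + 1 ≤ R * f θ₁ := by
    have := (div_le_iff₀' hRpos).mp hf1
    linarith
  have habs : -|C| ≤ C ∧ C ≤ |C| := ⟨neg_abs_le C, le_abs_self C⟩
  have hg2 : 0 ≤ g θ₂ := by
    have : g θ₂ = (A * Real.cos φ + B * Real.sin φ) * f θ₂ + C := by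
      rw [hg]; simp only [hcos2, hsin2]; ring
    rw [this, hdot]
    linarith [habs.1]
  have hg1 : g θ₁ ≤ 0 := by
    have : g θ₁ = -((A * Real.cos φ + B * Real.sin φ) * f θ₁) + C := by
      rw [hg]; simp only [hcos1, hsin1]; ring
    rw [this, hdot]
    linarith [habs.2]
  have hsub : Set.uIcc (g θ₁) (g θ₂) ⊆ g '' Set.uIcc θ₁ θ₂ :=
    intermediate_value_uIcc hgc.continuousOn
  have h0 : (0 : ℝ) ∈ Set.uIcc (g θ₁) (g θ₂) := Set.mem_uIcc.mpr (Or.inl ⟨hg1, hg2⟩)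
  obtain ⟨θ, _, hθ⟩ := hsub h0
  exact ⟨θ, hθ⟩
end

section
/- Let a > 1 and θ₀ > 0, and set R = e^{θ₀^a} / √(1 + a²·θ₀^{2a−2}). Then (1/R)·( ∫_{−∞}^{0} √(1 + a²·|θ|^{2a−2})·e^{−|θ|^a} dθ + ∫₀^{θ₀} √(1 + a²·θ^{2a−2})·e^{θ^a} dθ ) ≥ √(1 + a²·θ₀^{2a−2}) ≥ a·θ₀^{a−1}, and hence this normalized arclength lower bound tends to ∞ as θ₀ → ∞. -/
open Filter MeasureTheory Set

section aux

variable {a : ℝ}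

private lemma sq_eq (a t : ℝ) (ht : 0 ≤ t) :
    a ^ 2 * t ^ (2 * a - 2) = (a * t ^ (a - 1)) ^ 2 := by
  have h : (2 : ℝ) * a - 2 = (a - 1) * 2 := by ring
  rw [h, Real.rpow_mul ht, mul_pow, Real.rpow_two]

private lemma sqrt_ge (ha : 1 < a) (t : ℝ) (ht : 0 ≤ t) :
    a * t ^ (a - 1) ≤ Real.sqrt (1 + a ^ 2 * t ^ (2 * a - 2)) := by
  rw [sq_eq a t ht]
  have h0 : 0 ≤ a * t ^ (a - 1) :=
    mul_nonneg (by linarith) (Real.rpow_nonneg ht _)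
  calc a * t ^ (a - 1) = Real.sqrt ((a * t ^ (a - 1)) ^ 2) := (Real.sqrt_sq h0).symm
    _ ≤ Real.sqrt (1 + (a * t ^ (a - 1)) ^ 2) := Real.sqrt_le_sqrt (by linarith)

private lemma sqrt_le' (ha : 1 < a) (t : ℝ) (ht : 0 ≤ t) :
    Real.sqrt (1 + a ^ 2 * t ^ (2 * a - 2)) ≤ 1 + a * t ^ (a - 1) := by
  rw [sq_eq a t ht]
  have h0 : 0 ≤ a * t ^ (a - 1) :=
    mul_nonneg (by linarith) (Real.rpow_nonneg ht _)
  calc Real.sqrt (1 + (a * t ^ (a - 1)) ^ 2)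
      ≤ Real.sqrt ((1 + a * t ^ (a - 1)) ^ 2) := Real.sqrt_le_sqrt (by nlinarith)
    _ = 1 + a * t ^ (a - 1) := Real.sqrt_sq (by linarith)

private lemma deriv_negexp (ha : 1 < a) (t : ℝ) :
    HasDerivAt (fun t : ℝ => -Real.exp (-t ^ a))
      (a * t ^ (a - 1) * Real.exp (-t ^ a)) t := by
  have h1 : HasDerivAt (fun t : ℝ => t ^ a) (a * t ^ (a - 1)) t :=
    Real.hasDerivAt_rpow_const (Or.inr ha.le)
  have h2 : HasDerivAt (fun t : ℝ => -Real.exp (-t ^ a))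
      (-(Real.exp (-t ^ a) * -(a * t ^ (a - 1)))) t := ((h1.neg).exp).neg
  convert h2 using 1
  ring

private lemma deriv_exp' (ha : 1 < a) (t : ℝ) :
    HasDerivAt (fun t : ℝ => Real.exp (t ^ a))
      (a * t ^ (a - 1) * Real.exp (t ^ a)) t := by
  have h1 : HasDerivAt (fun t : ℝ => t ^ a) (a * t ^ (a - 1)) t :=
    Real.hasDerivAt_rpow_const (Or.inr ha.le)
  have h2 := h1.exp
  convert h2 using 1
  ring

private lemma cont_rpow (ha : 1 < a) (c : ℝ) (hc : 0 ≤ c) :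
    Continuous (fun t : ℝ => t ^ c) :=
  continuous_iff_continuousAt.2 fun x => Real.continuousAt_rpow_const x c (Or.inr hc)

private lemma cont_sqrt (ha : 1 < a) :
    Continuous (fun t : ℝ => Real.sqrt (1 + a ^ 2 * t ^ (2 * a - 2))) :=
  Real.continuous_sqrt.comp <| by
    have := cont_rpow ha (2 * a - 2) (by linarith)
    continuity

private lemma cont_F (ha : 1 < a) :
    Continuous (fun t : ℝ => Real.sqrt (1 + a ^ 2 * t ^ (2 * a - 2)) * Real.exp (t ^ a)) := by
  have h1 := cont_sqrt ha
  have h2 := cont_rpow ha a (by linarith)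
  exact h1.mul (Real.continuous_exp.comp h2)

private lemma cont_Fneg (ha : 1 < a) :
    Continuous (fun t : ℝ => Real.sqrt (1 + a ^ 2 * t ^ (2 * a - 2)) * Real.exp (-t ^ a)) := by
  have h1 := cont_sqrt ha
  have h2 := cont_rpow ha a (by linarith)
  exact h1.mul (Real.continuous_exp.comp h2.neg)

private lemma cont_phi (ha : 1 < a) :
    Continuous (fun t : ℝ => a * t ^ (a - 1) * Real.exp (t ^ a)) := by
  have h1 := cont_rpow ha (a - 1) (by linarith)
  have h2 := cont_rpow ha a (by linarith)
  exact ((continuous_const.mul h1).mul (Real.continuous_exp.comp h2))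

private lemma tendsto_negexp (ha : 1 < a) :
    Tendsto (fun t : ℝ => -Real.exp (-t ^ a)) atTop (nhds 0) := by
  have h1 : Tendsto (fun t : ℝ => t ^ a) atTop atTop := tendsto_rpow_atTop (by linarith)
  have h2 : Tendsto (fun t : ℝ => Real.exp (-t ^ a)) atTop (nhds 0) :=
    Real.tendsto_exp_atBot.comp (tendsto_neg_atBot_iff.2 h1)
  simpa using h2.neg

private lemma phi_neg_nonneg (ha : 1 < a) (t : ℝ) (ht : t ∈ Ioi (0:ℝ)) :
    0 ≤ a * t ^ (a - 1) * Real.exp (-t ^ a) :=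
  mul_nonneg (mul_nonneg (by linarith) (Real.rpow_nonneg (le_of_lt ht) _)) (Real.exp_pos _).le

/-- The integral of `a t^(a-1) e^{-t^a}` over `(0,∞)` equals 1. -/
private lemma integral_phi_neg (ha : 1 < a) :
    ∫ t in Ioi (0:ℝ), a * t ^ (a - 1) * Real.exp (-t ^ a) = 1 := by
  have h := MeasureTheory.integral_Ioi_of_hasDerivAt_of_nonneg'
    (g := fun t : ℝ => -Real.exp (-t ^ a))
    (g' := fun t : ℝ => a * t ^ (a - 1) * Real.exp (-t ^ a)) (a := 0) (l := 0)
    (fun x _ => deriv_negexp ha x) (phi_neg_nonneg ha) (tendsto_negexp ha)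
  rw [h]
  simp [Real.zero_rpow (show a ≠ 0 by linarith)]

private lemma integrable_phi_neg (ha : 1 < a) :
    IntegrableOn (fun t : ℝ => a * t ^ (a - 1) * Real.exp (-t ^ a)) (Ioi (0:ℝ)) :=
  MeasureTheory.integrableOn_Ioi_deriv_of_nonneg'
    (fun x _ => deriv_negexp ha x) (phi_neg_nonneg ha) (tendsto_negexp ha)

private lemma integrable_exp_neg (ha : 1 < a) :
    IntegrableOn (fun t : ℝ => Real.exp (-t ^ a)) (Ioi (0:ℝ)) := by
  have h := integrableOn_rpow_mul_exp_neg_rpow (s := 0) (p := a) (by norm_num) (by linarith)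
  simpa using h

private lemma integrable_Fneg (ha : 1 < a) :
    IntegrableOn
      (fun t : ℝ => Real.sqrt (1 + a ^ 2 * t ^ (2 * a - 2)) * Real.exp (-t ^ a))
      (Ioi (0:ℝ)) := by
  have hbound : IntegrableOn
      (fun t : ℝ => Real.exp (-t ^ a) + a * t ^ (a - 1) * Real.exp (-t ^ a)) (Ioi (0:ℝ)) :=
    (integrable_exp_neg ha).add (integrable_phi_neg ha)
  refine hbound.mono' ((cont_Fneg ha).aestronglyMeasurable.restrict) ?_
  filter_upwards [MeasureTheory.ae_restrict_mem measurableSet_Ioi] with t ht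
  have ht0 : (0:ℝ) ≤ t := le_of_lt ht
  have hnn : 0 ≤ Real.sqrt (1 + a ^ 2 * t ^ (2 * a - 2)) * Real.exp (-t ^ a) :=
    mul_nonneg (Real.sqrt_nonneg _) (Real.exp_pos _).le
  rw [Real.norm_eq_abs, abs_of_nonneg hnn]
  have := sqrt_le' ha t ht0
  nlinarith [Real.exp_pos (-t ^ a), Real.rpow_nonneg ht0 (a - 1)]

/-- The Iic-integral is at least 1. -/
private lemma I1_ge_one (ha : 1 < a) :
    1 ≤ ∫ θ in Iic (0:ℝ),
        Real.sqrt (1 + a ^ 2 * |θ| ^ (2 * a - 2)) * Real.exp (-|θ| ^ a) := by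
  have hcongr : ∫ θ in Iic (0:ℝ),
        Real.sqrt (1 + a ^ 2 * |θ| ^ (2 * a - 2)) * Real.exp (-|θ| ^ a)
      = ∫ θ in Iic (0:ℝ),
        Real.sqrt (1 + a ^ 2 * (-θ) ^ (2 * a - 2)) * Real.exp (-(-θ) ^ a) := by
    refine setIntegral_congr_fun measurableSet_Iic fun θ hθ => ?_
    rw [abs_of_nonpos (mem_Iic.1 hθ)]
  rw [hcongr]
  have hflip : (∫ θ in Iic (0:ℝ),
        Real.sqrt (1 + a ^ 2 * (-θ) ^ (2 * a - 2)) * Real.exp (-(-θ) ^ a))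
      = ∫ t in Ioi (0:ℝ),
        Real.sqrt (1 + a ^ 2 * t ^ (2 * a - 2)) * Real.exp (-t ^ a) := by
    simpa using integral_comp_neg_Iic (0:ℝ)
      (fun t : ℝ => Real.sqrt (1 + a ^ 2 * t ^ (2 * a - 2)) * Real.exp (-t ^ a))
  rw [hflip]
  calc (1:ℝ) = ∫ t in Ioi (0:ℝ), a * t ^ (a - 1) * Real.exp (-t ^ a) :=
        (integral_phi_neg ha).symm
    _ ≤ _ := by
        refine setIntegral_mono_on (integrable_phi_neg ha) (integrable_Fneg ha)
          measurableSet_Ioi fun t ht => ?_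
        exact mul_le_mul_of_nonneg_right (sqrt_ge ha t (le_of_lt ht)) (Real.exp_pos _).le

/-- The interval integral is at least `e^{θ₀^a} - 1`. -/
private lemma I2_ge (ha : 1 < a) (θ₀ : ℝ) (hθ : 0 < θ₀) :
    Real.exp (θ₀ ^ a) - 1 ≤
      ∫ θ in (0:ℝ)..θ₀, Real.sqrt (1 + a ^ 2 * θ ^ (2 * a - 2)) * Real.exp (θ ^ a) := by
  have hFTC : ∫ θ in (0:ℝ)..θ₀, a * θ ^ (a - 1) * Real.exp (θ ^ a)
      = Real.exp (θ₀ ^ a) - 1 := by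
    have h := intervalIntegral.integral_eq_sub_of_hasDerivAt
      (f := fun t : ℝ => Real.exp (t ^ a))
      (f' := fun t : ℝ => a * t ^ (a - 1) * Real.exp (t ^ a))
      (fun x _ => deriv_exp' ha x) ((cont_phi ha).intervalIntegrable 0 θ₀)
    rw [h]
    simp [Real.zero_rpow (show a ≠ 0 by linarith)]
  rw [← hFTC]
  refine intervalIntegral.integral_mono_on hθ.le
    ((cont_phi ha).intervalIntegrable 0 θ₀) ((cont_F ha).intervalIntegrable 0 θ₀)
    fun t ht => ?_
  exact mul_le_mul_of_nonneg_right (sqrt_ge ha t ht.1) (Real.exp_pos _).le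

end aux

open Filter

theorem exp_power_arclength_bound_a_gt_one (a : ℝ) (ha : 1 < a) (R : ℝ → ℝ)
    (hR : ∀ t, R t = Real.exp (t ^ a) / Real.sqrt (1 + a ^ 2 * t ^ (2 * a - 2))) :
    (∀ θ₀ > (0 : ℝ),
      (1 / R θ₀) *
        ((∫ θ in Set.Iic (0 : ℝ),
            Real.sqrt (1 + a ^ 2 * |θ| ^ (2 * a - 2)) * Real.exp (-|θ| ^ a)) +
          ∫ θ in (0 : ℝ)..θ₀,
            Real.sqrt (1 + a ^ 2 * θ ^ (2 * a - 2)) * Real.exp (θ ^ a)) ≥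
        Real.sqrt (1 + a ^ 2 * θ₀ ^ (2 * a - 2)) ∧
      Real.sqrt (1 + a ^ 2 * θ₀ ^ (2 * a - 2)) ≥ a * θ₀ ^ (a - 1)) ∧
    Tendsto (fun θ₀ => (1 / R θ₀) *
        ((∫ θ in Set.Iic (0 : ℝ),
            Real.sqrt (1 + a ^ 2 * |θ| ^ (2 * a - 2)) * Real.exp (-|θ| ^ a)) +
          ∫ θ in (0 : ℝ)..θ₀,
            Real.sqrt (1 + a ^ 2 * θ ^ (2 * a - 2)) * Real.exp (θ ^ a)))
      atTop atTop := by
  have hmain : ∀ θ₀ > (0 : ℝ),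
      (1 / R θ₀) *
        ((∫ θ in Set.Iic (0 : ℝ),
            Real.sqrt (1 + a ^ 2 * |θ| ^ (2 * a - 2)) * Real.exp (-|θ| ^ a)) +
          ∫ θ in (0 : ℝ)..θ₀,
            Real.sqrt (1 + a ^ 2 * θ ^ (2 * a - 2)) * Real.exp (θ ^ a)) ≥
        Real.sqrt (1 + a ^ 2 * θ₀ ^ (2 * a - 2)) ∧
      Real.sqrt (1 + a ^ 2 * θ₀ ^ (2 * a - 2)) ≥ a * θ₀ ^ (a - 1) := by
    intro θ₀ hθ₀
    have hsnn : (0:ℝ) ≤ a ^ 2 * θ₀ ^ (2 * a - 2) :=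
      mul_nonneg (sq_nonneg a) (Real.rpow_nonneg hθ₀.le _)
    have hspos : 0 < Real.sqrt (1 + a ^ 2 * θ₀ ^ (2 * a - 2)) :=
      Real.sqrt_pos.2 (by linarith)
    have hepos : 0 < Real.exp (θ₀ ^ a) := Real.exp_pos _
    constructor
    · have hI1 := I1_ge_one ha
      have hI2 := I2_ge ha θ₀ hθ₀
      have hsum : Real.exp (θ₀ ^ a) ≤
          (∫ θ in Set.Iic (0 : ℝ),
              Real.sqrt (1 + a ^ 2 * |θ| ^ (2 * a - 2)) * Real.exp (-|θ| ^ a)) +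
            ∫ θ in (0 : ℝ)..θ₀,
              Real.sqrt (1 + a ^ 2 * θ ^ (2 * a - 2)) * Real.exp (θ ^ a) := by linarith
      rw [hR θ₀, one_div_div]
      rw [ge_iff_le, div_mul_eq_mul_div, le_div_iff₀ hepos]
      calc Real.sqrt (1 + a ^ 2 * θ₀ ^ (2 * a - 2)) * Real.exp (θ₀ ^ a)
          ≤ Real.sqrt (1 + a ^ 2 * θ₀ ^ (2 * a - 2)) * _ :=
            mul_le_mul_of_nonneg_left hsum hspos.le
        _ = _ := by ring
    · exact sqrt_ge ha θ₀ hθ₀.le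
  refine ⟨hmain, ?_⟩
  have hlim : Tendsto (fun θ₀ : ℝ => a * θ₀ ^ (a - 1)) atTop atTop :=
    (tendsto_rpow_atTop (by linarith : (0:ℝ) < a - 1)).const_mul_atTop (by linarith)
  refine tendsto_atTop_mono' atTop ?_ hlim
  filter_upwards [eventually_gt_atTop (0:ℝ)] with θ₀ hθ₀
  have h := hmain θ₀ hθ₀
  linarith [h.1, h.2]
end

section
/- Let 0 < a < 1, and for θ₀ > 0 set R(θ₀) = e^{θ₀^a} / √(1 + a²·θ₀^{2a−2}). Then (1/R(θ₀))·∫₀^{θ₀} e^{θ^a} dθ = (√(1 + a²·θ₀^{2a−2}) / e^{θ₀^a})·∫₀^{θ₀} e^{θ^a} dθ tends to ∞ as θ₀ → ∞. -/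
open Filter

theorem exp_power_arclength_bound_a_lt_one (a : ℝ) (ha0 : 0 < a) (ha1 : a < 1)
    (R : ℝ → ℝ)
    (hR : ∀ t, R t = Real.exp (t ^ a) / Real.sqrt (1 + a ^ 2 * t ^ (2 * a - 2))) :
    (∀ θ₀ > (0 : ℝ),
      (1 / R θ₀) * ∫ θ in (0 : ℝ)..θ₀, Real.exp (θ ^ a) =
        (Real.sqrt (1 + a ^ 2 * θ₀ ^ (2 * a - 2)) / Real.exp (θ₀ ^ a)) *
          ∫ θ in (0 : ℝ)..θ₀, Real.exp (θ ^ a)) ∧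
    Tendsto (fun θ₀ => (1 / R θ₀) * ∫ θ in (0 : ℝ)..θ₀, Real.exp (θ ^ a))
      atTop atTop := by
  have hcont : Continuous fun θ : ℝ => Real.exp (θ ^ a) := by
    apply Real.continuous_exp.comp
    exact continuous_iff_continuousAt.mpr fun x =>
      Real.continuousAt_rpow_const x a (Or.inr ha0.le)
  constructor
  · intro θ₀ _
    rw [hR, one_div_div]
  · rw [tendsto_atTop]
    intro C
    set M : ℝ := 2 * max C 1 with hMdef
    have hM2 : (2 : ℝ) ≤ M := by
      have : (1 : ℝ) ≤ max C 1 := le_max_right _ _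
      simp only [hMdef]; linarith
    have hM0 : 0 < M := by linarith
    have hCM : C ≤ M / 2 := by
      have : C ≤ max C 1 := le_max_left _ _
      simp only [hMdef]; linarith
    set ε : ℝ := Real.log 2 / (a * M) with hεdef
    have hε0 : 0 < ε := div_pos (Real.log_pos one_lt_two) (by positivity)
    have h1 : ∀ᶠ θ₀ : ℝ in atTop, (θ₀ - M) ^ (a - 1) ≤ ε := by
      have htend : Tendsto (fun θ₀ : ℝ => (θ₀ - M) ^ (a - 1)) atTop (nhds 0) := by
        have h := (tendsto_rpow_neg_atTop (y := 1 - a) (by linarith)).comp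
          (tendsto_atTop_add_const_right atTop (-M) tendsto_id)
        have he : a - 1 = -(1 - a) := by ring
        rw [he]
        simpa [Function.comp_def, sub_eq_add_neg] using h
      exact htend.eventually (eventually_le_nhds hε0)
    have h2 : ∀ᶠ θ₀ : ℝ in atTop, M + 1 ≤ θ₀ := eventually_ge_atTop _
    filter_upwards [h1, h2] with θ₀ hε hθ
    set y : ℝ := θ₀ - M with hydef
    have hy1 : 1 ≤ y := by simp only [hydef]; linarith
    have hy0 : 0 < y := by linarith
    have hyθ : y < θ₀ := by simp only [hydef]; linarith
    have hθ0 : 0 < θ₀ := by linarith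
    -- Step A : θ₀^a - y^a ≤ log 2
    have hA : θ₀ ^ a - y ^ a ≤ Real.log 2 := by
      obtain ⟨c, hc, hceq⟩ := exists_hasDerivAt_eq_slope (fun x => x ^ a)
        (fun x => a * x ^ (a - 1)) hyθ
        ((continuous_iff_continuousAt.mpr fun x =>
          Real.continuousAt_rpow_const x a (Or.inr ha0.le)).continuousOn)
        (fun x hx => Real.hasDerivAt_rpow_const
          (Or.inl (ne_of_gt (hy0.trans hx.1))))
      have hcy : c ^ (a - 1) ≤ y ^ (a - 1) :=
        Real.rpow_le_rpow_of_nonpos hy0 hc.1.le (by linarith)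
      have hMeq : θ₀ - y = M := by simp [hydef]
      rw [hMeq, eq_div_iff (ne_of_gt hM0)] at hceq
      have hstep : a * c ^ (a - 1) * M ≤ a * ε * M :=
        mul_le_mul_of_nonneg_right
          (mul_le_mul_of_nonneg_left (hcy.trans hε) ha0.le) hM0.le
      have hεM : a * ε * M = Real.log 2 := by
        rw [hεdef]; field_simp
      linarith
    -- Step B : M * exp(y^a) ≤ ∫
    have hB : M * Real.exp (y ^ a) ≤ ∫ θ in (0:ℝ)..θ₀, Real.exp (θ ^ a) := by
      have hint : ∀ u v : ℝ, IntervalIntegrable (fun θ => Real.exp (θ ^ a))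
          MeasureTheory.volume u v := fun u v => hcont.intervalIntegrable u v
      have hsplit : (∫ θ in (0:ℝ)..θ₀, Real.exp (θ ^ a)) =
          (∫ θ in (0:ℝ)..y, Real.exp (θ ^ a)) + ∫ θ in y..θ₀, Real.exp (θ ^ a) :=
        (intervalIntegral.integral_add_adjacent_intervals (hint 0 y) (hint y θ₀)).symm
      have hnn : 0 ≤ ∫ θ in (0:ℝ)..y, Real.exp (θ ^ a) :=
        intervalIntegral.integral_nonneg hy0.le fun x _ => (Real.exp_pos _).le
      have hlower : M * Real.exp (y ^ a) ≤ ∫ θ in y..θ₀, Real.exp (θ ^ a) := by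
        have hconst : (∫ _ in y..θ₀, Real.exp (y ^ a)) = M * Real.exp (y ^ a) := by
          rw [intervalIntegral.integral_const, smul_eq_mul]
          congr 1
          simp [hydef]
        rw [← hconst]
        apply intervalIntegral.integral_mono_on hyθ.le
          (intervalIntegrable_const) (hint y θ₀)
        intro x hx
        exact Real.exp_le_exp.mpr (Real.rpow_le_rpow hy0.le hx.1 ha0.le)
      linarith
    -- Step C : conclusion
    have hexp : Real.exp (y ^ a - θ₀ ^ a) ≥ 1 / 2 := by
      rw [ge_iff_le, show (1:ℝ)/2 = Real.exp (-Real.log 2) by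
        rw [Real.exp_neg, Real.exp_log two_pos]; ring]
      exact Real.exp_le_exp.mpr (by linarith)
    have hsqrt : 1 ≤ Real.sqrt (1 + a ^ 2 * θ₀ ^ (2 * a - 2)) := by
      rw [Real.one_le_sqrt]
      have : 0 ≤ a ^ 2 * θ₀ ^ (2 * a - 2) := by positivity
      linarith
    have hintnn : 0 ≤ ∫ θ in (0:ℝ)..θ₀, Real.exp (θ ^ a) :=
      le_trans (by positivity) hB
    simp only [hR, one_div_div]
    calc C ≤ M / 2 := hCM
      _ = M * (1/2) := by ring
      _ ≤ M * Real.exp (y ^ a - θ₀ ^ a) := by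
          apply mul_le_mul_of_nonneg_left hexp hM0.le
      _ = M * Real.exp (y ^ a) * (1 / Real.exp (θ₀ ^ a)) := by
          rw [Real.exp_sub]; ring
      _ ≤ (∫ θ in (0:ℝ)..θ₀, Real.exp (θ ^ a)) * (1 / Real.exp (θ₀ ^ a)) := by
          apply mul_le_mul_of_nonneg_right hB (by positivity)
      _ ≤ (∫ θ in (0:ℝ)..θ₀, Real.exp (θ ^ a)) *
            (Real.sqrt (1 + a ^ 2 * θ₀ ^ (2 * a - 2)) / Real.exp (θ₀ ^ a)) := by
          gcongr
      _ = Real.sqrt (1 + a ^ 2 * θ₀ ^ (2 * a - 2)) / Real.exp (θ₀ ^ a) *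
            ∫ θ in (0:ℝ)..θ₀, Real.exp (θ ^ a) := by ring
end

section
/- Let b > 0, and for θ₀ > 0 set R(θ₀) = θ₀^{b+1}·e^{θ₀} / √(θ₀² + (b + θ₀)²). Then (√2 / R(θ₀))·∫₀^{θ₀ + π} θ^{b}·e^{θ} dθ tends to 2·e^{π} as θ₀ → ∞, and 2·e^{π} > 13.82. -/
open Filter Real

lemma intble (b : ℝ) (hb : 0 < b) (a c : ℝ) :
    IntervalIntegrable (fun θ : ℝ => θ ^ b * Real.exp θ) MeasureTheory.volume a c :=
  ContinuousOn.intervalIntegrable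
    ((continuousOn_id.rpow_const (fun _ _ => Or.inr hb.le)).mul Real.continuous_exp.continuousOn)

lemma ratio_tendsto (b : ℝ) (hb : 0 < b) :
    Tendsto (fun x : ℝ => (∫ θ in (0:ℝ)..x, θ ^ b * Real.exp θ) / (x ^ b * Real.exp x))
      atTop (nhds 1) := by
  have hlog : Tendsto (fun x : ℝ => Real.log x / x) atTop (nhds 0) := by
    simpa using Real.tendsto_pow_log_div_mul_add_atTop 1 0 1 one_ne_zero
  have hinv : Tendsto (fun x : ℝ => 1 / x) atTop (nhds 0) := by
    simpa [one_div] using tendsto_inv_atTop_zero (𝕜 := ℝ)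
  -- lower bound function
  have hglim : Tendsto (fun x : ℝ => (1 - Real.log x / x) ^ b * (1 - 1 / x)) atTop (nhds 1) := by
    have h1 : Tendsto (fun x : ℝ => (1 - Real.log x / x)) atTop (nhds 1) := by
      simpa using (tendsto_const_nhds (x := (1:ℝ)) (f := atTop)).sub hlog
    have h2 : Tendsto (fun x : ℝ => (1 - Real.log x / x) ^ b) atTop (nhds 1) := by
      simpa using h1.rpow_const (Or.inl one_ne_zero)
    have h3 : Tendsto (fun x : ℝ => (1 - 1 / x)) atTop (nhds 1) := by
      simpa using (tendsto_const_nhds (x := (1:ℝ)) (f := atTop)).sub hinv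
    simpa using h2.mul h3
  refine tendsto_of_tendsto_of_tendsto_of_le_of_le' hglim tendsto_const_nhds ?_ ?_
  · -- lower: eventually g x ≤ F x / (x^b e^x)
    filter_upwards [eventually_ge_atTop (2:ℝ)] with x hx2
    have hx0 : (0:ℝ) < x := by linarith
    set m := x - Real.log x with hm
    have hlogx : Real.log x ≤ x - 1 := Real.log_le_sub_one_of_pos hx0
    have hlogpos : 0 < Real.log x := Real.log_pos (by linarith)
    have hm0 : (0:ℝ) < m := by simp only [hm]; linarith
    have hmx : m ≤ x := by simp only [hm]; linarith
    have hFsplit : (∫ θ in (0:ℝ)..m, θ ^ b * Real.exp θ) + (∫ θ in m..x, θ ^ b * Real.exp θ)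
        = ∫ θ in (0:ℝ)..x, θ ^ b * Real.exp θ :=
      intervalIntegral.integral_add_adjacent_intervals (intble b hb 0 m) (intble b hb m x)
    have h1 : 0 ≤ ∫ θ in (0:ℝ)..m, θ ^ b * Real.exp θ := by
      apply intervalIntegral.integral_nonneg hm0.le
      intro u hu
      exact mul_nonneg (Real.rpow_nonneg hu.1 b) (Real.exp_pos u).le
    have h2 : (∫ θ in m..x, (fun θ => m ^ b * Real.exp θ) θ) ≤ ∫ θ in m..x, θ ^ b * Real.exp θ := by
      apply intervalIntegral.integral_mono_on hmx
      · exact (continuous_const.mul Real.continuous_exp).intervalIntegrable m x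
      · exact intble b hb m x
      · intro u hu
        exact mul_le_mul_of_nonneg_right (Real.rpow_le_rpow hm0.le hu.1 hb.le) (Real.exp_pos u).le
    have h3 : (∫ θ in m..x, (fun θ => m ^ b * Real.exp θ) θ) = m ^ b * (Real.exp x - Real.exp m) := by
      rw [intervalIntegral.integral_const_mul, integral_exp]
    have hem : Real.exp m = Real.exp x / x := by
      rw [hm, Real.exp_sub, Real.exp_log hx0]
    have key : m ^ b * (Real.exp x - Real.exp x / x) ≤ ∫ θ in (0:ℝ)..x, θ ^ b * Real.exp θ := by
      rw [← hFsplit]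
      have := h3 ▸ h2
      rw [hem] at this
      linarith
    have hden : 0 < x ^ b * Real.exp x := mul_pos (Real.rpow_pos_of_pos hx0 b) (Real.exp_pos x)
    rw [le_div_iff₀ hden]
    calc (1 - Real.log x / x) ^ b * (1 - 1 / x) * (x ^ b * Real.exp x)
        = ((1 - Real.log x / x) ^ b * x ^ b) * ((1 - 1/x) * Real.exp x) := by ring
      _ = m ^ b * (Real.exp x - Real.exp x / x) := by
          rw [← Real.mul_rpow (by rw [sub_nonneg, div_le_one hx0]; linarith) hx0.le]
          congr 1
          · congr 1
            field_simp [hm]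
            rw [hm]
          · field_simp
      _ ≤ _ := key
  · -- upper
    filter_upwards [eventually_ge_atTop (1:ℝ)] with x hx1
    have hx0 : (0:ℝ) < x := by linarith
    have hden : 0 < x ^ b * Real.exp x := mul_pos (Real.rpow_pos_of_pos hx0 b) (Real.exp_pos x)
    rw [div_le_one hden]
    have h2 : (∫ θ in (0:ℝ)..x, θ ^ b * Real.exp θ) ≤ ∫ θ in (0:ℝ)..x, (fun θ => x ^ b * Real.exp θ) θ := by
      apply intervalIntegral.integral_mono_on hx0.le (intble b hb 0 x)
      · exact (continuous_const.mul Real.continuous_exp).intervalIntegrable 0 x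
      · intro u hu
        exact mul_le_mul_of_nonneg_right (Real.rpow_le_rpow hu.1 hu.2 hb.le) (Real.exp_pos u).le
    have h3 : (∫ θ in (0:ℝ)..x, (fun θ => x ^ b * Real.exp θ) θ) = x ^ b * (Real.exp x - 1) := by
      rw [intervalIntegral.integral_const_mul, integral_exp, Real.exp_zero]
    refine h2.trans ?_
    rw [h3]
    have : Real.exp x - 1 ≤ Real.exp x := by linarith
    exact mul_le_mul_of_nonneg_left this (Real.rpow_pos_of_pos hx0 b).le

theorem power_exp_arclength_limit (b : ℝ) (hb : 0 < b) (R : ℝ → ℝ)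
    (hR : ∀ t, R t = t ^ (b + 1) * Real.exp t / Real.sqrt (t ^ 2 + (b + t) ^ 2)) :
    Tendsto (fun θ₀ =>
        (Real.sqrt 2 / R θ₀) *
          ∫ θ in (0 : ℝ)..(θ₀ + Real.pi), θ ^ b * Real.exp θ)
      atTop (nhds (2 * Real.exp Real.pi)) ∧
    2 * Real.exp Real.pi > 13.82 := by
  constructor
  · set F : ℝ → ℝ := fun x => ∫ θ in (0:ℝ)..x, θ ^ b * Real.exp θ with hF
    -- three factors
    have T1 : Tendsto (fun θ : ℝ => Real.sqrt 2 * Real.sqrt (1 + (1 + b / θ) ^ 2)) atTop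
        (nhds 2) := by
      have hb0 : Tendsto (fun θ : ℝ => b / θ) atTop (nhds 0) :=
        tendsto_const_nhds.div_atTop tendsto_id
      have h1 : Tendsto (fun θ : ℝ => 1 + (1 + b / θ) ^ 2) atTop (nhds 2) := by
        have : Tendsto (fun θ : ℝ => 1 + b / θ) atTop (nhds 1) := by
          simpa using tendsto_const_nhds.add hb0
        have h := (tendsto_const_nhds (x := (1:ℝ)) (f := atTop)).add (this.pow 2)
        norm_num at h
        exact h
      have h2 : Tendsto (fun θ : ℝ => Real.sqrt (1 + (1 + b / θ) ^ 2)) atTop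
          (nhds (Real.sqrt 2)) := (Real.continuous_sqrt.continuousAt).tendsto.comp h1
      have h := (tendsto_const_nhds (x := Real.sqrt 2) (f := atTop)).mul h2
      simpa [Real.mul_self_sqrt (by norm_num : (0:ℝ) ≤ 2)] using h
    have T2 : Tendsto (fun θ : ℝ => F (θ + π) / ((θ + π) ^ b * Real.exp (θ + π))) atTop
        (nhds 1) :=
      (ratio_tendsto b hb).comp (tendsto_atTop_add_const_right atTop π tendsto_id)
    have T3 : Tendsto (fun θ : ℝ => (1 + π / θ) ^ b * Real.exp π) atTop
        (nhds (Real.exp π)) := by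
      have hp0 : Tendsto (fun θ : ℝ => 1 + π / θ) atTop (nhds 1) := by
        simpa using tendsto_const_nhds.add (tendsto_const_nhds.div_atTop (tendsto_id (α := ℝ)))
      have h := (hp0.rpow_const (p := b) (Or.inl one_ne_zero)).mul_const (Real.exp π)
      simpa using h
    have Tall := (T1.mul T2).mul T3
    norm_num at Tall
    refine Tall.congr' ?_
    filter_upwards [eventually_ge_atTop (1:ℝ)] with θ hθ1
    have hθ0 : (0:ℝ) < θ := by linarith
    have hπ : (0:ℝ) < π := Real.pi_pos
    have hθπ : (0:ℝ) < θ + π := by linarith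
    -- rewrite R
    rw [hR θ]
    have hsq : Real.sqrt (θ ^ 2 + (b + θ) ^ 2) = θ * Real.sqrt (1 + (1 + b / θ) ^ 2) := by
      rw [← Real.sqrt_sq hθ0.le, ← Real.sqrt_mul (sq_nonneg θ)]
      congr 1
      rw [Real.sqrt_sq hθ0.le]
      field_simp
      ring
    have hsqpos : 0 < Real.sqrt (1 + (1 + b / θ) ^ 2) := Real.sqrt_pos.mpr (by positivity)
    have hrpow1 : θ ^ (b + 1) = θ ^ b * θ := by
      rw [Real.rpow_add hθ0, Real.rpow_one]
    have hrpow2 : (θ + π) ^ b = (1 + π / θ) ^ b * θ ^ b := by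
      rw [← Real.mul_rpow (by positivity) hθ0.le]
      congr 1
      field_simp
    have hb1 : (0:ℝ) < θ ^ b := Real.rpow_pos_of_pos hθ0 b
    have hb2 : (0:ℝ) < (1 + π / θ) ^ b := Real.rpow_pos_of_pos (by positivity) b
    rw [hsq, hrpow1, Real.exp_add θ π, hrpow2]
    field_simp
    ring
  · have h3 : (3:ℝ) < π := Real.pi_gt_three
    have he : Real.exp 3 < Real.exp π := Real.exp_lt_exp.mpr h3
    have he3 : Real.exp 3 = Real.exp 1 * Real.exp 1 * Real.exp 1 := by
      rw [← Real.exp_add, ← Real.exp_add]; norm_num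
    have h1 : (2.7182818283:ℝ) < Real.exp 1 := Real.exp_one_gt_d9
    nlinarith [Real.exp_pos 1]
end
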